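/- For the outjoin D = K_j →∨ K̄_ℓ with j ≥ 2 and ℓ ≥ 0, we have F(D) = n − 2 < n − 1 = Z(D), where n = j + ℓ: every (n−1)-subset of V(D) is a zero forcing set and every (n−2)-subset is a failed zero forcing set. -/
import Mathlib


/-- The set of out-neighbors of `v` in the digraph with arc relation `A`. -/
def Nout {V : Type} (A : V → V → Prop) (v : V) : Set V := {w | A v w}

/-- The set of in-neighbors of `v`. -/
def Nin {V : Type} (A : V → V → Prop) (v : V) : Set V := {w | A w v}

/-- One application of the color change rule to the set `S` of filled vertices. -/
def Bstep {V : Type} (A : V → V → Prop) (S : Set V) : Set V :=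
  S ∪ {w | ∃ v ∈ S, Nout A v \ S = {w}}

/-- `S` is a zero forcing set: iterating the color change rule fills all vertices. -/
def IsZFS {V : Type} (A : V → V → Prop) (S : Set V) : Prop :=
  ∃ t, (Bstep A)^[t] S = Set.univ

/-- The failed zero forcing number: the maximum cardinality of a failed zero forcing set. -/
noncomputable def Fnum {V : Type} (A : V → V → Prop) : ℕ :=
  sSup {k | ∃ S : Set V, ¬ IsZFS A S ∧ S.ncard = k}

/-- The zero forcing number: the minimum cardinality of a zero forcing set. -/
noncomputable def Znum {V : Type} (A : V → V → Prop) : ℕ :=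
  sInf {k | ∃ S : Set V, IsZFS A S ∧ S.ncard = k}

/-- `W` is a critical set: `W` is nonempty and no vertex outside `W` has exactly one
out-neighbor in `W`. -/
def IsCritical {V : Type} (A : V → V → Prop) (W : Set V) : Prop :=
  W.Nonempty ∧ ∀ v ∈ Wᶜ, (Nout A v ∩ W).ncard ≠ 1

/-- `D` is a directed cycle: either a single vertex with no arcs, or the vertices can be
cyclically labeled so that the arcs are exactly the consecutive ones. -/
def IsDirectedCycle {V : Type} [Fintype V] (A : V → V → Prop) : Prop :=
  (Fintype.card V = 1 ∧ ∀ u v : V, ¬ A u v) ∨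
  (2 ≤ Fintype.card V ∧ ∃ e : ZMod (Fintype.card V) ≃ V,
      ∀ i j : ZMod (Fintype.card V), A (e i) (e j) ↔ j = i + 1)

/-- The outjoin of the complete digraph `K_j` to the empty digraph on `ℓ` vertices. -/
def outjoinKEmpty (j ℓ : ℕ) : (Fin j ⊕ Fin ℓ) → (Fin j ⊕ Fin ℓ) → Prop
  | .inl a, .inl b => a ≠ b
  | .inl _, .inr _ => True
  | .inr _, _ => False


section Aux

variable {j ℓ : ℕ}

lemma aux_ncard_sum (S : Set (Fin j ⊕ Fin ℓ)) : S.ncard + Sᶜ.ncard = j + ℓ := by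
  rw [Set.ncard_add_ncard_compl]
  simp

lemma aux_nout_inl (a : Fin j) :
    Nout (outjoinKEmpty j ℓ) (Sum.inl a) = {Sum.inl a}ᶜ := by
  ext x
  cases x with
  | inl b =>
    simp only [Nout, outjoinKEmpty, Set.mem_setOf_eq, Set.mem_compl_iff,
      Set.mem_singleton_iff, Sum.inl.injEq]
    exact ne_comm
  | inr c =>
    simp [Nout, outjoinKEmpty]

lemma aux_nout_inr (c : Fin ℓ) :
    Nout (outjoinKEmpty j ℓ) (Sum.inr c) = ∅ := by
  ext x
  cases x <;> simp [Nout, outjoinKEmpty]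

lemma aux_bstep_fixed (S : Set (Fin j ⊕ Fin ℓ)) (u v : Fin j ⊕ Fin ℓ)
    (hu : u ∉ S) (hv : v ∉ S) (huv : u ≠ v) :
    Bstep (outjoinKEmpty j ℓ) S = S := by
  rw [Bstep, Set.union_eq_left]
  rintro w ⟨x, hxS, hx⟩
  exfalso
  cases x with
  | inr c =>
    rw [aux_nout_inr, Set.empty_diff] at hx
    exact (Set.singleton_nonempty w).ne_empty hx.symm
  | inl a =>
    rw [aux_nout_inl] at hx
    have hu' : u ∈ ({Sum.inl a}ᶜ : Set (Fin j ⊕ Fin ℓ)) \ S := by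
      refine ⟨fun h => hu ?_, hu⟩
      rw [Set.mem_singleton_iff] at h
      exact h ▸ hxS
    have hv' : v ∈ ({Sum.inl a}ᶜ : Set (Fin j ⊕ Fin ℓ)) \ S := by
      refine ⟨fun h => hv ?_, hv⟩
      rw [Set.mem_singleton_iff] at h
      exact h ▸ hxS
    rw [hx, Set.mem_singleton_iff] at hu' hv'
    exact huv (hu'.trans hv'.symm)

lemma aux_not_zfs (S : Set (Fin j ⊕ Fin ℓ)) (u v : Fin j ⊕ Fin ℓ)
    (hu : u ∉ S) (hv : v ∉ S) (huv : u ≠ v) :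
    ¬ IsZFS (outjoinKEmpty j ℓ) S := by
  rintro ⟨t, ht⟩
  rw [Function.iterate_fixed (aux_bstep_fixed S u v hu hv huv) t] at ht
  exact hu (ht ▸ Set.mem_univ u)

lemma aux_not_zfs_big (S : Set (Fin j ⊕ Fin ℓ)) (h2 : 2 ≤ Sᶜ.ncard) :
    ¬ IsZFS (outjoinKEmpty j ℓ) S := by
  obtain ⟨u, v, hu, hv, huv⟩ := (Set.one_lt_ncard_iff (Set.toFinite _)).mp h2
  exact aux_not_zfs S u v hu hv huv

lemma aux_zfs (hj : 2 ≤ j) (S : Set (Fin j ⊕ Fin ℓ)) (w : Fin j ⊕ Fin ℓ)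
    (hw : Sᶜ = {w}) : IsZFS (outjoinKEmpty j ℓ) S := by
  obtain ⟨a, ha⟩ : ∃ a : Fin j, Sum.inl a ∈ S := by
    by_contra h
    push_neg at h
    have h0 : (Sum.inl ⟨0, by omega⟩ : Fin j ⊕ Fin ℓ) ∈ Sᶜ := h _
    have h1 : (Sum.inl ⟨1, by omega⟩ : Fin j ⊕ Fin ℓ) ∈ Sᶜ := h _
    rw [hw, Set.mem_singleton_iff] at h0 h1
    have := h0.trans h1.symm
    simp [Fin.ext_iff] at this
  have hwS : w ∉ S := by
    have : w ∈ Sᶜ := hw ▸ Set.mem_singleton w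
    exact this
  have hna : Nout (outjoinKEmpty j ℓ) (Sum.inl a) \ S = {w} := by
    rw [aux_nout_inl, Set.diff_eq, hw]
    refine Set.inter_eq_right.mpr ?_
    rw [Set.singleton_subset_iff]
    exact fun h => hwS ((Set.mem_singleton_iff.mp h) ▸ ha)
  refine ⟨1, ?_⟩
  rw [Function.iterate_one]
  apply Set.eq_univ_of_forall
  intro x
  by_cases hx : x ∈ S
  · exact Or.inl hx
  · have : x ∈ Sᶜ := hx
    rw [hw, Set.mem_singleton_iff] at this
    subst this
    exact Or.inr ⟨Sum.inl a, ha, hna⟩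

end Aux

theorem stmt_13 (j ℓ : ℕ) (hj : 2 ≤ j) :
    Fnum (outjoinKEmpty j ℓ) = j + ℓ - 2 ∧
    Znum (outjoinKEmpty j ℓ) = j + ℓ - 1 ∧
    (∀ S : Set (Fin j ⊕ Fin ℓ), S.ncard = j + ℓ - 1 → IsZFS (outjoinKEmpty j ℓ) S) ∧
    (∀ S : Set (Fin j ⊕ Fin ℓ), S.ncard = j + ℓ - 2 → ¬ IsZFS (outjoinKEmpty j ℓ) S) := by
  have P3 : ∀ S : Set (Fin j ⊕ Fin ℓ), S.ncard = j + ℓ - 1 →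
      IsZFS (outjoinKEmpty j ℓ) S := by
    intro S hS
    have hsum := aux_ncard_sum S
    have hc : Sᶜ.ncard = 1 := by omega
    obtain ⟨w, hw⟩ := Set.ncard_eq_one.mp hc
    exact aux_zfs hj S w hw
  have P4 : ∀ S : Set (Fin j ⊕ Fin ℓ), S.ncard = j + ℓ - 2 →
      ¬ IsZFS (outjoinKEmpty j ℓ) S := by
    intro S hS
    have hsum := aux_ncard_sum S
    exact aux_not_zfs_big S (by omega)
  have v0 : Fin j ⊕ Fin ℓ := Sum.inl ⟨0, by omega⟩
  refine ⟨?_, ?_, P3, P4⟩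
  · -- Fnum
    have h01 : (Sum.inl ⟨0, by omega⟩ : Fin j ⊕ Fin ℓ) ≠ Sum.inl ⟨1, by omega⟩ := by
      simp [Fin.ext_iff]
    set T : Set (Fin j ⊕ Fin ℓ) :=
      {Sum.inl ⟨0, by omega⟩, Sum.inl ⟨1, by omega⟩} with hT
    have hT2 : T.ncard = 2 := Set.ncard_pair h01
    have hTc : Tᶜ.ncard = j + ℓ - 2 := by
      have h1 := aux_ncard_sum T
      have h2 := aux_ncard_sum Tᶜ
      rw [compl_compl] at h2
      omega
    have hmem : (j + ℓ - 2) ∈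
        {k | ∃ S : Set (Fin j ⊕ Fin ℓ), ¬ IsZFS (outjoinKEmpty j ℓ) S ∧ S.ncard = k} := by
      refine ⟨Tᶜ, ?_, hTc⟩
      refine aux_not_zfs _ _ _ ?_ ?_ h01
      · simp [hT]
      · simp [hT]
    apply le_antisymm
    · apply csSup_le ⟨_, hmem⟩
      rintro k ⟨S, hnz, rfl⟩
      have hsum := aux_ncard_sum S
      by_contra hk
      push_neg at hk
      have h2 : Sᶜ.ncard ≤ 1 := by omega
      interval_cases h : Sᶜ.ncard
      · have : Sᶜ = ∅ := (Set.ncard_eq_zero (Set.toFinite _)).mp h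
        have : S = Set.univ := by rwa [Set.compl_empty_iff] at this
        exact hnz ⟨0, by simpa [Function.iterate_zero] using this⟩
      · obtain ⟨w, hw⟩ := Set.ncard_eq_one.mp h
        exact hnz (aux_zfs hj S w hw)
    · exact le_csSup ⟨j + ℓ, by rintro k ⟨S, _, rfl⟩; have := aux_ncard_sum S; omega⟩ hmem
  · -- Znum
    have hmem : (j + ℓ - 1) ∈
        {k | ∃ S : Set (Fin j ⊕ Fin ℓ), IsZFS (outjoinKEmpty j ℓ) S ∧ S.ncard = k} := by
      have hc : ({v0}ᶜ : Set (Fin j ⊕ Fin ℓ)).ncard = j + ℓ - 1 := by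
        have h1 := aux_ncard_sum ({v0} : Set (Fin j ⊕ Fin ℓ))
        have h2 := aux_ncard_sum ({v0}ᶜ : Set (Fin j ⊕ Fin ℓ))
        rw [compl_compl] at h2
        rw [Set.ncard_singleton] at h1
        omega
      exact ⟨{v0}ᶜ, P3 _ hc, hc⟩
    apply le_antisymm
    · exact Nat.sInf_le hmem
    · apply le_csInf ⟨_, hmem⟩
      rintro k ⟨S, hz, rfl⟩
      have hsum := aux_ncard_sum S
      by_contra hk
      push_neg at hk
      exact aux_not_zfs_big S (by omega) hz
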